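/- (Cone condition for the Lasso error, from the proof of Lemma 2.) Let L : ℝ^p → ℝ be convex and differentiable, let β* ∈ ℝ^p with support S* = {j : β*_j ≠ 0}, let λ > 0, and let β̃ be a global minimizer of β ↦ L(β) + λ‖β‖₁. If ‖∇L(β*)‖_∞ ≤ λ/2, then the error w = β̃ − β* satisfies ∑_{j ∉ S*} |w_j| ≤ 3 ∑_{j ∈ S*} |w_j|. -/

import Mathlib

open scoped BigOperators Classical

noncomputable section

/-- Cone condition for the Lasso error (from the proof of Lemma 2): if
`‖∇L(β*)‖_∞ ≤ λ/2` and `β̃` globally minimizes `L(β) + λ‖β‖₁`, then the error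
`w = β̃ − β*` satisfies `∑_{j ∉ S*} |wⱼ| ≤ 3 ∑_{j ∈ S*} |wⱼ|`, where
`S* = {j : β*ⱼ ≠ 0}`. -/
theorem lasso_cone_condition
    {p : ℕ} (L : EuclideanSpace ℝ (Fin p) → ℝ)
    (hconv : ConvexOn ℝ Set.univ L) (hdiff : Differentiable ℝ L)
    (βs : EuclideanSpace ℝ (Fin p)) (lam : ℝ) (hlam : 0 < lam)
    (βt : EuclideanSpace ℝ (Fin p))
    (hmin : ∀ β : EuclideanSpace ℝ (Fin p),
      L βt + lam * ∑ j, |βt j| ≤ L β + lam * ∑ j, |β j|)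
    (hgrad : ∀ j : Fin p, |fderiv ℝ L βs (EuclideanSpace.single j 1)| ≤ lam / 2) :
    ∑ j ∈ Finset.univ.filter (fun j => βs j = 0), |(βt - βs) j| ≤
      3 * ∑ j ∈ Finset.univ.filter (fun j => βs j ≠ 0), |(βt - βs) j| := by
  set w : EuclideanSpace ℝ (Fin p) := βt - βs with hw
  set g : ℝ → ℝ := fun t => L (βs + t • w) with hg
  -- derivative of g at 0
  have hline : HasDerivAt (fun t : ℝ => βs + t • w) w 0 := by
    simpa using ((hasDerivAt_id (0:ℝ)).smul_const w).const_add βs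
  have hL0 : HasFDerivAt L (fderiv ℝ L βs) (βs + (0:ℝ) • w) := by
    simpa using (hdiff βs).hasFDerivAt
  have hgderiv : HasDerivAt g (fderiv ℝ L βs w) 0 := hL0.comp_hasDerivAt 0 hline
  -- convexity of g
  have hgconv : ConvexOn ℝ Set.univ g := by
    refine ⟨convex_univ, fun x _ y _ a b ha hb hab => ?_⟩
    have key : βs + (a • x + b • y) • w = a • (βs + x • w) + b • (βs + y • w) := by
      ext i
      simp only [PiLp.add_apply, PiLp.smul_apply, smul_eq_mul]
      linear_combination (-βs i) * hab
    rw [hg]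
    simp only [key]
    exact hconv.2 (Set.mem_univ _) (Set.mem_univ _) ha hb hab
  -- gradient inequality
  have hslope : fderiv ℝ L βs w ≤ L βt - L βs := by
    have := hgconv.le_slope_of_hasDerivAt (Set.mem_univ (0:ℝ)) (Set.mem_univ (1:ℝ))
      zero_lt_one hgderiv
    rw [slope_def_field] at this
    simpa [hg, hw] using this
  -- bound the directional derivative below
  have hwdecomp : w = ∑ j, w j • EuclideanSpace.single j 1 := by
    ext i
    simp only [PiLp.smul_apply]
    rw [WithLp.ofLp_sum, Finset.sum_apply]
    simp [EuclideanSpace.single_apply]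
  have hdir : fderiv ℝ L βs w = ∑ j, w j * fderiv ℝ L βs (EuclideanSpace.single j 1) := by
    conv_lhs => rw [hwdecomp]
    rw [map_sum]
    simp
  have hlow : -(lam / 2) * ∑ j, |w j| ≤ fderiv ℝ L βs w := by
    rw [hdir, neg_mul, Finset.mul_sum, ← Finset.sum_neg_distrib]
    refine Finset.sum_le_sum fun j _ => ?_
    have h1 : |w j * fderiv ℝ L βs (EuclideanSpace.single j 1)| ≤ lam / 2 * |w j| := by
      rw [abs_mul, mul_comm]
      exact mul_le_mul_of_nonneg_right (hgrad j) (abs_nonneg _)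
    nlinarith [neg_abs_le (w j * fderiv ℝ L βs (EuclideanSpace.single j 1))]
  -- minimality at βs
  have hmin' : L βt - L βs ≤ lam * (∑ j, |βs j| - ∑ j, |βt j|) := by
    have := hmin βs
    ring_nf
    nlinarith [hmin βs]
  -- the ℓ1 norm difference bound
  set A := ∑ j ∈ Finset.univ.filter (fun j => βs j = 0), |w j| with hA
  set B := ∑ j ∈ Finset.univ.filter (fun j => βs j ≠ 0), |w j| with hB
  have hsplit : ∀ v : EuclideanSpace ℝ (Fin p), ∑ j, |v j| =
      ∑ j ∈ Finset.univ.filter (fun j => βs j = 0), |v j| +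
      ∑ j ∈ Finset.univ.filter (fun j => βs j ≠ 0), |v j| := fun v =>
    (Finset.sum_filter_add_sum_filter_not Finset.univ _ _).symm
  have hT : ∑ j, |w j| = A + B := hsplit w
  have hdiff1 : ∑ j, |βs j| - ∑ j, |βt j| ≤ B - A := by
    rw [hsplit βs, hsplit βt]
    have h0 : ∑ j ∈ Finset.univ.filter (fun j => βs j = 0), |βs j| = 0 := by
      apply Finset.sum_eq_zero
      intro j hj
      rw [Finset.mem_filter] at hj
      simp [hj.2]
    have h0' : ∑ j ∈ Finset.univ.filter (fun j => βs j = 0), |βt j| = A := by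
      rw [hA]
      apply Finset.sum_congr rfl
      intro j hj
      rw [Finset.mem_filter] at hj
      have : w j = βt j := by simp [hw, hj.2]
      rw [this]
    have h1 : ∑ j ∈ Finset.univ.filter (fun j => βs j ≠ 0), |βs j| -
        ∑ j ∈ Finset.univ.filter (fun j => βs j ≠ 0), |βt j| ≤ B := by
      rw [hB, ← Finset.sum_sub_distrib]
      refine Finset.sum_le_sum fun j _ => ?_
      have : w j = βt j - βs j := by simp [hw]
      rw [this, abs_sub_comm]
      exact abs_sub_abs_le_abs_sub _ _
    linarith
  -- combine
  have hcomb : -(lam / 2) * (A + B) ≤ lam * (B - A) := by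
    rw [← hT]
    calc -(lam / 2) * ∑ j, |w j| ≤ fderiv ℝ L βs w := hlow
      _ ≤ L βt - L βs := hslope
      _ ≤ lam * (∑ j, |βs j| - ∑ j, |βt j|) := hmin'
      _ ≤ lam * (B - A) := by
          exact mul_le_mul_of_nonneg_left hdiff1 hlam.le
  nlinarith [hcomb]
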